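/- Let R be an RC-closed collection of strings over the DNA alphabet, each terminated by the sentinel $, let X be a nonempty string over the DNA alphabet occurring in R, and let c be a DNA symbol. In the lexicographically sorted list of all suffixes of the sentinel-terminated strings, let [s_X, e_X] and [s_X̂, e_X̂] be the intervals of suffixes prefixed by X and by X̂, respectively. Then the interval of suffixes prefixed by X̂·π(c) is [s_X̂ + y, s_X̂ + y + z - 1], where y is the number of occurrences of X in strings of R whose left-context symbol a satisfies π(a) < π(c), and z = occ_R(c·X) is the number of occurrences of c·X in strings of R. Equivalently, y equals the number of ranks k in [s_X, e_X] with π(BWT[k]) < π(c), where BWT[k] is the symbol preceding the k-th sorted suffix within its string (the symbol preceding a full string T$ being $). -/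

import Mathlib

/-- The DNA alphabet Σ = {A, C, G, T}. -/
inductive Base : Type
  | A | C | G | T
  deriving DecidableEq, Repr

instance : Fintype Base := ⟨{.A, .C, .G, .T}, fun x => by cases x <;> decide⟩

/-- The DNA complement permutation π: A ↔ T, C ↔ G. -/
def comp : Base → Base
  | .A => .T
  | .T => .A
  | .C => .G
  | .G => .C

/-- The reverse complement Ŵ of a DNA string W. -/
def revComp (W : List Base) : List Base := W.reverse.map comp

/-- `W` occurs in `T` at (0-indexed) position `i`, i.e. `T[i..i+|W|-1] = W`. -/
def occursAt (W T : List Base) (i : ℕ) : Prop :=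
  i + W.length ≤ T.length ∧ (T.drop i).take W.length = W

instance (W T : List Base) : DecidablePred (occursAt W T) := fun i =>
  inferInstanceAs (Decidable (_ ∧ _))

/-- The number of occurrences of `W` in `T`. -/
noncomputable def occCount (W T : List Base) : ℕ := {i | occursAt W T i}.ncard

/-- The alphabet with the sentinel `$`: the sentinel is `⊥`, the DNA symbols are
coerced. The complement permutation is extended by `π($) = $`
(i.e. `WithBot.map comp ⊥ = ⊥`). -/
abbrev SymB := WithBot Base

/-- Left-context symbol of an occurrence of a string at (0-indexed) position `i`
in `T`: the symbol `T[i-1]` if `i > 0`, and the sentinel `$` otherwise. -/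
def leftCtx (T : List Base) (i : ℕ) : SymB :=
  if i = 0 then ⊥ else (T[i-1]?).elim ⊥ (fun a => (a : SymB))

/-- Right-context symbol of an occurrence of a string of length `m` at
(0-indexed) position `i` in `T`: the symbol `T[i+m]` if the occurrence does not
end at the last position of `T`, and the sentinel `$` otherwise. -/
def rightCtx (T : List Base) (m i : ℕ) : SymB :=
  (T[i+m]?).elim ⊥ (fun a => (a : SymB))

def Base.toNat : Base → ℕ
  | .A => 0 | .C => 1 | .G => 2 | .T => 3

/-- The lexicographic order A < C < G < T on the DNA alphabet; the sentinel
`⊥ = $` of `WithBot Base` is then smaller than every DNA symbol. -/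
instance : LinearOrder Base := LinearOrder.lift' Base.toNat (by decide)

/-- A DNA string viewed over the alphabet `WithBot Base` (DNA symbols + `$`). -/
def toW (X : List Base) : List (WithBot Base) := X.map (fun a => (a : WithBot Base))

/-- The sentinel-terminated string `T$`. -/
def sentinelTerm (T : List Base) : List (WithBot Base) := toW T ++ [⊥]

/-- The multiset of all (nonempty) suffixes of the sentinel-terminated strings
`T$` for `T` in `R`, with multiplicity. -/
def allSuffixes (R : Multiset (List Base)) : Multiset (List (WithBot Base)) :=
  R.bind (fun T => ((sentinelTerm T).tails.dropLast : List (List (WithBot Base))))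

/-- The list of all suffixes of the collection, sorted in nondecreasing
lexicographic order. -/
def sortedSuffixes (R : Multiset (List Base)) : List (List (WithBot Base)) :=
  (allSuffixes R).sort (· ≤ ·)

/-- The set of ranks (positions in the sorted suffix list) of the suffixes that
have `Y` as a prefix. -/
def rankSet (R : Multiset (List Base)) (Y : List (WithBot Base)) : Set ℕ :=
  {k | k < (sortedSuffixes R).length ∧ Y <+: (sortedSuffixes R).getD k []}

/-- A collection (multiset) of strings is RC-closed if every string has the same
multiplicity as its reverse complement. -/
def RCClosed (R : Multiset (List Base)) : Prop :=
  ∀ T : List Base, R.count T = R.count (revComp T)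

/-- Total number of occurrences of `W` among the strings of the collection `R`
(with multiplicity). -/
noncomputable def occR (R : Multiset (List Base)) (W : List Base) : ℕ :=
  (R.map (fun T => occCount W T)).sum

/-- The multiset of pairs (suffix of `T$`, symbol preceding that suffix within
`T$`), over all strings `T` of `R`; the symbol preceding the full string `T$`
is the sentinel `$ = ⊥`. The second component is the BWT symbol associated with
the suffix. -/
def taggedSuffixes (R : Multiset (List Base)) :
    Multiset (List (WithBot Base) × WithBot Base) :=
  R.bind (fun T =>
    ((List.range (T.length + 1)).map (fun i =>
      ((sentinelTerm T).drop i,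
        if i = 0 then (⊥ : WithBot Base) else (sentinelTerm T).getD (i-1) ⊥)) :
      List (List (WithBot Base) × WithBot Base)))

/-- `#{k ∈ [s_X, e_X] : π(BWT[k]) < π(c)}`: the number of suffixes of the
collection prefixed by `X` (equivalently, of ranks `k` in the interval
`[s_X, e_X]` of `X`) whose BWT symbol `BWT[k]` satisfies `π(BWT[k]) < π(c)`. -/
def bwtCount (R : Multiset (List Base)) (X : List Base) (c : Base) : ℕ :=
  Multiset.card ((taggedSuffixes R).filter (fun p =>
    toW X <+: p.1 ∧ WithBot.map comp p.2 < ((comp c : Base) : WithBot Base)))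

section Aux

lemma comp_comp (b : Base) : comp (comp b) = b := by cases b <;> rfl

lemma revComp_revComp (X : List Base) : revComp (revComp X) = X := by
  simp [revComp, List.map_reverse, List.map_map, Function.comp_def, comp_comp]

lemma length_revComp (X : List Base) : (revComp X).length = X.length := by simp [revComp]

lemma mapcomp_inv (x : SymB) : WithBot.map comp (WithBot.map comp x) = x := by
  cases x <;> simp [WithBot.map, comp_comp] <;> rfl

lemma toW_nil : toW [] = [] := rfl

lemma toW_cons (a : Base) (t : List Base) :
    toW (a :: t) = (a : WithBot Base) :: toW t := rfl

lemma length_toW (X : List Base) : (toW X).length = X.length := by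
  induction X with
  | nil => rfl
  | cons a t ih => rw [toW_cons, List.length_cons, List.length_cons, ih]

-- Lex order lemmas
lemma list_lt_iff_lex {α : Type*} [LinearOrder α] {l l' : List α} :
    l < l' ↔ List.Lex (· < ·) l l' := Iff.rfl

lemma cons_lt_cons_iff' {α : Type*} [LinearOrder α] {a : α} {l₁ l₂ : List α} :
    a :: l₁ < a :: l₂ ↔ l₁ < l₂ := by
  rw [list_lt_iff_lex, list_lt_iff_lex, List.cons_lex_cons_iff]; simp

lemma cons_le_cons_iff' {α : Type*} [LinearOrder α] {a : α} {l₁ l₂ : List α} :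
    a :: l₁ ≤ a :: l₂ ↔ l₁ ≤ l₂ := by
  rw [← not_lt, ← not_lt, cons_lt_cons_iff']

lemma append_le_append_iff' {α : Type*} [LinearOrder α] (W : List α) {l₁ l₂ : List α} :
    W ++ l₁ ≤ W ++ l₂ ↔ l₁ ≤ l₂ := by
  induction W with
  | nil => rfl
  | cons a W ih => simpa [cons_le_cons_iff'] using ih

lemma le_nil_iff {α : Type*} [LinearOrder α] {l : List α} : l ≤ [] ↔ l = [] := by
  constructor
  · intro h; exact le_antisymm h (by cases l with | nil => exact le_rfl | cons b t => exact le_of_lt (list_lt_iff_lex.2 List.Lex.nil))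
  · rintro rfl; exact le_rfl

lemma head_eq_of_between {α : Type*} [LinearOrder α] {a b : α} {l₁ l₂ l₃ l₄ : List α}
    (h1 : a :: l₁ ≤ b :: l₂) (h2 : b :: l₃ ≤ a :: l₄) : a = b := by
  have hab : a ≤ b := by
    rcases h1.lt_or_eq with h | h
    · exact List.head_le_of_lt h
    · exact le_of_eq (List.cons.inj h).1
  have hba : b ≤ a := by
    rcases h2.lt_or_eq with h | h
    · exact List.head_le_of_lt h
    · exact le_of_eq (List.cons.inj h).1
  exact le_antisymm hab hba

lemma prefix_convex {α : Type*} [LinearOrder α] {W S₁ S₂ S₃ : List α}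
    (h1 : W <+: S₁) (h3 : W <+: S₃) (h12 : S₁ ≤ S₂) (h23 : S₂ ≤ S₃) : W <+: S₂ := by
  induction W generalizing S₁ S₂ S₃ with
  | nil => exact List.nil_prefix
  | cons w W ih =>
    obtain ⟨t1, rfl⟩ := h1
    obtain ⟨t3, rfl⟩ := h3
    cases S₂ with
    | nil =>
      exact absurd (le_nil_iff.1 h12) (by simp)
    | cons h t2 =>
      have hw : w = h := head_eq_of_between h12 h23
      subst hw
      rw [List.cons_append, cons_le_cons_iff'] at h12
      rw [List.cons_append, cons_le_cons_iff'] at h23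
      have := ih ⟨t1, rfl⟩ ⟨t3, rfl⟩ h12 h23
      obtain ⟨r, rfl⟩ := this
      exact ⟨r, rfl⟩

lemma getD_mono_of_prefix {α : Type*} [LinearOrder α] [OrderBot α] {W S₁ S₂ : List α}
    (h1 : W <+: S₁) (h2 : W <+: S₂) (h12 : S₁ ≤ S₂) :
    S₁.getD W.length ⊥ ≤ S₂.getD W.length ⊥ := by
  obtain ⟨t1, rfl⟩ := h1
  obtain ⟨t2, rfl⟩ := h2
  rw [List.getD_append_right _ _ _ _ le_rfl, List.getD_append_right _ _ _ _ le_rfl,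
    Nat.sub_self]
  rw [append_le_append_iff'] at h12
  cases t1 with
  | nil => exact bot_le
  | cons a r1 =>
    cases t2 with
    | nil => exact absurd (le_nil_iff.1 h12) (by simp)
    | cons b r2 =>
      simp only [List.getD_cons_zero]
      rcases h12.lt_or_eq with h | h
      · exact List.head_le_of_lt h
      · exact le_of_eq (List.cons.inj h).1

lemma snoc_prefix_iff {α : Type*} [Inhabited α] {W S : List α} {x d : α} (hx : x ≠ d) :
    W ++ [x] <+: S ↔ (W <+: S ∧ S.getD W.length d = x) := by
  constructor
  · rintro ⟨r, rfl⟩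
    refine ⟨⟨x :: r, by simp⟩, ?_⟩
    rw [List.append_assoc, List.getD_append_right _ _ _ _ le_rfl, Nat.sub_self]
    rfl
  · rintro ⟨⟨t, rfl⟩, hg⟩
    rw [List.getD_append_right _ _ _ _ le_rfl, Nat.sub_self] at hg
    cases t with
    | nil => simp only [List.getD_nil] at hg; exact absurd hg.symm hx
    | cons a r =>
      simp only [List.getD_cons_zero] at hg
      subst hg
      exact ⟨r, by simp⟩

end Aux
section Aux2

lemma toW_take (Y : List Base) (n : ℕ) : toW (Y.take n) = (toW Y).take n := by
  induction Y generalizing n with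
  | nil => simp [toW_nil]
  | cons a t ih =>
    cases n with
    | zero => rfl
    | succ n => rw [List.take_succ_cons, toW_cons, toW_cons, List.take_succ_cons, ih]

lemma toW_drop (Y : List Base) (n : ℕ) : toW (Y.drop n) = (toW Y).drop n := by
  induction Y generalizing n with
  | nil => simp [toW_nil]
  | cons a t ih =>
    cases n with
    | zero => rfl
    | succ n => rw [List.drop_succ_cons, toW_cons, List.drop_succ_cons, ih]

lemma toW_inj {Y Z : List Base} (h : toW Y = toW Z) : Y = Z := by
  induction Y generalizing Z with
  | nil => cases Z with
    | nil => rfl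
    | cons b z => exact absurd h (by rw [toW_nil, toW_cons]; simp)
  | cons a t ih =>
    cases Z with
    | nil => exact absurd h (by rw [toW_nil, toW_cons]; simp)
    | cons b z =>
      rw [toW_cons, toW_cons] at h
      obtain ⟨h1, h2⟩ := List.cons.inj h
      rw [WithBot.coe_inj] at h1
      rw [h1, ih h2]

lemma not_bot_mem_toW (Y : List Base) : (⊥ : SymB) ∉ toW Y := by
  induction Y with
  | nil => simp [toW_nil]
  | cons a t ih => rw [toW_cons]; simp only [List.mem_cons]; rintro (h | h)
                   · exact WithBot.coe_ne_bot h.symm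
                   · exact ih h

lemma toW_getElem? (T : List Base) (k : ℕ) :
    (toW T)[k]? = Option.map (fun a : Base => (a : WithBot Base)) T[k]? := by
  induction T generalizing k with
  | nil => simp [toW_nil]
  | cons a t ih =>
    cases k with
    | zero => rw [toW_cons, List.getElem?_cons_zero, List.getElem?_cons_zero, Option.map_some]
    | succ k => rw [toW_cons, List.getElem?_cons_succ, List.getElem?_cons_succ, ih]

lemma toW_prefix_toW_iff {Y Z : List Base} : toW Y <+: toW Z ↔ Y <+: Z := by
  rw [List.prefix_iff_eq_take, List.prefix_iff_eq_take, length_toW, ← toW_take]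
  exact ⟨fun h => toW_inj h, fun h => by rw [← h]⟩

lemma toW_prefix_iff {Y Z : List Base} : toW Y <+: toW Z ++ [(⊥:SymB)] ↔ Y <+: Z := by
  constructor
  · intro h
    by_cases hle : Y.length ≤ Z.length
    · rw [List.prefix_iff_eq_take, List.take_append_of_le_length
        (by rw [length_toW, length_toW]; exact hle)] at h
      rw [← List.prefix_iff_eq_take] at h
      exact toW_prefix_toW_iff.1 h
    · exfalso
      have hlen := h.length_le
      rw [length_toW] at hlen
      simp only [List.length_append, List.length_cons, List.length_nil, length_toW] at hlen
      have heq : toW Y = toW Z ++ [(⊥:SymB)] := by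
        apply h.eq_of_length
        rw [length_toW]
        simp only [List.length_append, List.length_cons, List.length_nil, length_toW]
        omega
      have : (⊥:SymB) ∈ toW Y := by rw [heq]; simp
      exact not_bot_mem_toW Y this
  · intro h
    exact (toW_prefix_toW_iff.2 h).trans (List.prefix_append _ _)

lemma drop_sentinel {T : List Base} {i : ℕ} (hi : i ≤ T.length) :
    (sentinelTerm T).drop i = toW (T.drop i) ++ [(⊥:SymB)] := by
  rw [sentinelTerm, List.drop_append_of_le_length (by rwa [length_toW]), toW_drop]

lemma suffix_prefix_iff {Y T : List Base} {i : ℕ} (hi : i ≤ T.length) :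
    toW Y <+: (sentinelTerm T).drop i ↔ occursAt Y T i := by
  rw [drop_sentinel hi, toW_prefix_iff, occursAt]
  constructor
  · intro h
    have hl := h.length_le
    simp only [List.length_drop] at hl
    refine ⟨by omega, ?_⟩
    exact ((List.prefix_iff_eq_take.1 h)).symm
  · rintro ⟨hlen, htake⟩
    rw [List.prefix_iff_eq_take]
    exact htake.symm

lemma getD_drop' {α : Type*} (L : List α) (i m : ℕ) (d : α) :
    (L.drop i).getD m d = L.getD (i+m) d := by
  simp [List.getD_eq_getElem?_getD, List.getElem?_drop]

lemma sentinel_getD (T : List Base) (k : ℕ) :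
    (sentinelTerm T).getD k ⊥ = (T[k]?).elim ⊥ (fun a => (a : SymB)) := by
  rw [sentinelTerm]
  by_cases hk : k < T.length
  · rw [List.getD_eq_getElem?_getD, List.getElem?_append, if_pos (by rwa [length_toW]),
      toW_getElem?, List.getElem?_eq_getElem hk]
    rfl
  · rw [List.getD_append_right _ _ _ _ (by rw [length_toW]; omega), length_toW,
      List.getElem?_eq_none (by omega)]
    rcases Nat.lt_or_ge (k - T.length) 1 with h | h
    · have : k - T.length = 0 := by omega
      rw [this]; rfl
    · rw [List.getD_eq_getElem?_getD, List.getElem?_eq_none (by simpa using h)]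
      rfl

lemma rightCtx_eq_getD (T : List Base) (m i : ℕ) :
    rightCtx T m i = (sentinelTerm T).getD (i+m) ⊥ := by
  rw [sentinel_getD]; rfl

lemma tag_eq_leftCtx (T : List Base) (i : ℕ) :
    (if i = 0 then (⊥:SymB) else (sentinelTerm T).getD (i-1) ⊥) = leftCtx T i := by
  by_cases h : i = 0
  · simp [h, leftCtx]
  · rw [if_neg h, sentinel_getD, leftCtx, if_neg h]

lemma tails_dropLast_eq {α : Type*} (L : List α) :
    L.tails.dropLast = (List.range L.length).map (L.drop ·) := by
  induction L with
  | nil => simp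
  | cons a t ih =>
    rw [List.tails_cons, List.dropLast_cons_of_ne_nil (by cases t <;> simp),
      List.length_cons, List.range_succ_eq_map, List.map_cons, ih, List.map_map]
    simp [Function.comp_def]

end Aux2
section Aux3

lemma countP_bind_list {β γ : Type*} (R : Multiset β) (f : β → List γ)
    (p : γ → Prop) [DecidablePred p] :
    Multiset.countP p (R.bind (fun T => (f T : Multiset γ))) =
      (R.map (fun T => (f T).countP (fun x => decide (p x)))).sum := by
  induction R using Multiset.induction with
  | empty => simp
  | cons a s ih =>
    rw [Multiset.cons_bind, Multiset.countP_add, ih, Multiset.map_cons, Multiset.sum_cons,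
      Multiset.coe_countP]

lemma dc_eq_Ico (s e : ℕ) (A : Finset ℕ) (hsub : A ⊆ Finset.Ico s e)
    (hdc : ∀ k ∈ Finset.Ico s e, ∀ a ∈ A, k ≤ a → k ∈ A) :
    A = Finset.Ico s (s + A.card) := by
  rcases A.eq_empty_or_nonempty with rfl | hne
  · simp
  · have hmax := A.max'_mem hne
    have h1 : A = Finset.Ico s (A.max' hne + 1) := by
      ext k
      simp only [Finset.mem_Ico]
      constructor
      · intro hk
        exact ⟨(Finset.mem_Ico.1 (hsub hk)).1, Nat.lt_succ_of_le (A.le_max' k hk)⟩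
      · rintro ⟨hk1, hk2⟩
        refine hdc k (Finset.mem_Ico.2 ⟨hk1, ?_⟩) _ hmax (by omega)
        have := (Finset.mem_Ico.1 (hsub hmax)).2
        omega
    have hs : s ≤ A.max' hne := (Finset.mem_Ico.1 (hsub hmax)).1
    have hcard : A.card = A.max' hne + 1 - s := by
      conv_lhs => rw [h1]
      rw [Nat.card_Ico]
    rw [hcard, show s + (A.max' hne + 1 - s) = A.max' hne + 1 by omega]
    exact h1

lemma ncard_filter_range (n : ℕ) (p : ℕ → Prop) [DecidablePred p] (h : ∀ i, p i → i < n) :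
    {i | p i}.ncard = ((Finset.range n).filter p).card := by
  rw [← Set.ncard_coe_finset]
  congr 1
  ext k
  simp only [Finset.coe_filter, Finset.mem_range, Set.mem_setOf_eq]
  exact ⟨fun hk => ⟨h k hk, hk⟩, fun hk => hk.2⟩

lemma card_filter_range_eq_countP (n : ℕ) (p : ℕ → Prop) [DecidablePred p] :
    ((Finset.range n).filter p).card = (List.range n).countP (fun i => decide (p i)) := by
  rw [Finset.card_filter]
  induction n with
  | zero => simp
  | succ n ih =>
    rw [Finset.sum_range_succ, List.range_succ, List.countP_append, ih]
    simp [List.countP_cons]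

lemma countP_range_getD {γ : Type*} (L : List γ) (p : γ → Bool) (d : γ) :
    (List.range L.length).countP (fun k => p (L.getD k d)) = L.countP p := by
  induction L with
  | nil => simp
  | cons a t ih =>
    rw [List.length_cons, List.range_succ_eq_map, List.countP_cons, List.countP_map,
      List.countP_cons]
    have : (fun k => p ((a :: t).getD k d)) ∘ Nat.succ = fun k => p (t.getD k d) := by
      funext k
      simp [List.getD_cons_succ]
    rw [this, ih]
    rw [List.getD_cons_zero]

lemma ncard_setOf_eq_countP (n : ℕ) (p : ℕ → Prop) [DecidablePred p] (h : ∀ i, p i → i < n) :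
    {i | p i}.ncard = (List.range n).countP (fun i => decide (p i)) := by
  rw [ncard_filter_range n p h, card_filter_range_eq_countP]

lemma map_revComp_eq {R : Multiset (List Base)} (hR : RCClosed R) :
    R.map revComp = R := by
  ext b
  have hinj : Function.Injective revComp :=
    Function.LeftInverse.injective revComp_revComp
  calc Multiset.count b (Multiset.map revComp R)
      = Multiset.count (revComp (revComp b)) (Multiset.map revComp R) := by
        rw [revComp_revComp]
    _ = Multiset.count (revComp b) R := Multiset.count_map_eq_count' _ _ hinj _
    _ = Multiset.count (revComp (revComp b)) R := hR (revComp b)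
    _ = Multiset.count b R := by rw [revComp_revComp]

end Aux3
section Aux4

lemma drop_reverse' {α : Type*} (l : List α) (k : ℕ) (hk : k ≤ l.length) :
    l.reverse.drop k = (l.take (l.length - k)).reverse := by
  rw [List.reverse_take, show l.length - (l.length - k) = k by omega]

lemma occ_flip {Y T : List Base} {i : ℕ} (h : occursAt Y T i) :
    occursAt (revComp Y) (revComp T) (T.length - Y.length - i) ∧
    rightCtx (revComp T) Y.length (T.length - Y.length - i) =
      WithBot.map comp (leftCtx T i) := by
  obtain ⟨hlen, htake⟩ := h
  have hTlen : (revComp T).length = T.length := length_revComp T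
  have hYlen : (revComp Y).length = Y.length := length_revComp Y
  have hrc : revComp T = (T.map comp).reverse := by
    rw [revComp, List.map_reverse]
  constructor
  · refine ⟨by omega, ?_⟩
    rw [hYlen, hrc]
    have h1 : (T.map comp).reverse.drop (T.length - Y.length - i) =
        ((T.map comp).take (Y.length + i)).reverse := by
      rw [drop_reverse' _ _ (by simp only [List.length_reverse, List.length_map]; omega)]
      congr 2
      simp only [List.length_map]
      omega
    rw [h1, List.take_reverse]
    have h2 : ((T.map comp).take (Y.length + i)).length = Y.length + i := by
      simp only [List.length_take, List.length_map]
      omega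
    rw [h2, show Y.length + i - Y.length = i by omega, List.drop_take,
      show Y.length + i - i = Y.length by omega, ← List.map_drop, ← List.map_take, htake]
    rw [revComp, List.map_reverse]
  · rw [rightCtx, leftCtx]
    by_cases hi : i = 0
    · subst hi
      rw [if_pos rfl]
      have : T.length - Y.length - 0 + Y.length = T.length := by omega
      rw [this, List.getElem?_eq_none (by omega)]
      simp [WithBot.map_bot]
    · rw [if_neg hi]
      have hidx : T.length - Y.length - i + Y.length = T.length - i := by omega
      rw [hidx, hrc]
      have hlt : T.length - i < (T.map comp).reverse.length := by
        simp only [List.length_reverse, List.length_map]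
        omega
      rw [List.getElem?_reverse (by simpa using hlt)]
      simp only [List.length_map]
      have : T.length - 1 - (T.length - i) = i - 1 := by omega
      rw [this, List.getElem?_map, List.getElem?_eq_getElem (show i - 1 < T.length by omega)]
      simp [WithBot.map_coe]

lemma occ_flip' {Y T : List Base} {i : ℕ} (h : occursAt Y T i) :
    occursAt (revComp Y) (revComp T) (T.length - Y.length - i) ∧
    WithBot.map comp (leftCtx (revComp T) (T.length - Y.length - i)) =
      rightCtx T Y.length i := by
  obtain ⟨h1, _⟩ := occ_flip h
  refine ⟨h1, ?_⟩
  have h2 := (occ_flip h1).2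
  rw [revComp_revComp, length_revComp, length_revComp] at h2
  have hidx : T.length - Y.length - (T.length - Y.length - i) = i := by
    have := h.1; omega
  rw [hidx] at h2
  exact h2.symm

lemma flip_set (X T : List Base) (Q : SymB → Prop) :
    {i | occursAt (revComp X) T i ∧ Q (rightCtx T (revComp X).length i)} =
      (fun j => T.length - (revComp X).length - j) ''
        {j | occursAt X (revComp T) j ∧ Q (WithBot.map comp (leftCtx (revComp T) j))} := by
  ext i
  simp only [Set.mem_image, Set.mem_setOf_eq]
  constructor
  · rintro ⟨h1, h2⟩
    obtain ⟨h3, h4⟩ := occ_flip' h1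
    rw [revComp_revComp] at h3
    refine ⟨T.length - (revComp X).length - i, ⟨h3, ?_⟩, ?_⟩
    · rw [h4]; exact h2
    · have := h1.1; omega
  · rintro ⟨j, ⟨h1, h2⟩, rfl⟩
    obtain ⟨h3, h4⟩ := occ_flip h1
    rw [revComp_revComp] at h3 h4
    rw [length_revComp X, ← length_revComp T]
    constructor
    · exact h3
    · rw [length_revComp T, ← length_revComp X] at h4 ⊢
      rw [h4]
      exact h2

lemma occursAt_cons_iff (c : Base) (X T : List Base) (j : ℕ) :
    occursAt (c :: X) T j ↔ (occursAt X T (j+1) ∧ leftCtx T (j+1) = (c : SymB)) := by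
  constructor
  · rintro ⟨hlen, htake⟩
    rw [List.length_cons] at hlen
    have hj : j < T.length := by omega
    rw [List.drop_eq_getElem_cons hj, List.length_cons, List.take_succ_cons] at htake
    obtain ⟨h1, h2⟩ := List.cons.inj htake
    refine ⟨⟨by omega, h2⟩, ?_⟩
    rw [leftCtx, if_neg (by omega), Nat.add_sub_cancel,
      List.getElem?_eq_getElem hj, h1]
    rfl
  · rintro ⟨⟨hlen, htake⟩, hctx⟩
    have hj : j < T.length := by omega
    rw [leftCtx, if_neg (by omega), Nat.add_sub_cancel,
      List.getElem?_eq_getElem hj] at hctx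
    have hc : T[j] = c := by
      have : ((T[j] : Base) : SymB) = (c : SymB) := hctx
      exact WithBot.coe_inj.1 this
    refine ⟨by rw [List.length_cons]; omega, ?_⟩
    rw [List.drop_eq_getElem_cons hj, List.length_cons, List.take_succ_cons, htake, hc]

lemma ncard_left_c (X : List Base) (c : Base) (T : List Base) :
    {j | occursAt X T j ∧ leftCtx T j = (c : SymB)}.ncard = occCount (c :: X) T := by
  rw [occCount]
  have himg : {j | occursAt X T j ∧ leftCtx T j = (c:SymB)} =
      (fun j => j + 1) '' {i | occursAt (c::X) T i} := by
    ext j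
    simp only [Set.mem_image, Set.mem_setOf_eq]
    constructor
    · rintro ⟨h1, h2⟩
      have hj : j ≠ 0 := by
        rintro rfl
        rw [leftCtx, if_pos rfl] at h2
        exact WithBot.bot_ne_coe h2
      refine ⟨j - 1, ?_, by omega⟩
      rw [occursAt_cons_iff, show j - 1 + 1 = j by omega]
      exact ⟨h1, h2⟩
    · rintro ⟨i, hi, rfl⟩
      exact (occursAt_cons_iff c X T i).1 hi
  rw [himg, Set.ncard_image_of_injective _ (fun a b hab => by omega)]

lemma perT (X : List Base) (T : List Base) (Q : SymB → Prop) [DecidablePred Q] :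
    (List.range (T.length + 1)).countP
      (fun i => decide (occursAt (revComp X) T i ∧ Q (rightCtx T (revComp X).length i)))
    = {j | occursAt X (revComp T) j ∧ Q (WithBot.map comp (leftCtx (revComp T) j))}.ncard := by
  rw [← ncard_setOf_eq_countP (T.length+1) _ (fun i hi => by have := hi.1.1; omega)]
  rw [flip_set X T Q]
  rw [Set.ncard_image_of_injOn ?_]
  intro j1 hj1 j2 hj2 hf
  have h1 := hj1.1.1
  have h2 := hj2.1.1
  rw [length_revComp] at h1 h2
  simp only [length_revComp] at hf
  omega

end Aux4
section Aux5

lemma length_sentinelTerm (T : List Base) : (sentinelTerm T).length = T.length + 1 := by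
  rw [sentinelTerm, List.length_append, length_toW]
  rfl

lemma count_suffixList (X : List Base) (T : List Base) (Q : SymB → Prop) [DecidablePred Q] :
    ((sentinelTerm T).tails.dropLast).countP
      (fun S => decide (toW (revComp X) <+: S ∧ Q (S.getD (toW (revComp X)).length ⊥)))
    = {j | occursAt X (revComp T) j ∧ Q (WithBot.map comp (leftCtx (revComp T) j))}.ncard := by
  rw [tails_dropLast_eq, List.countP_map, length_sentinelTerm, ← perT X T Q]
  apply List.countP_congr
  intro i hi
  rw [List.mem_range] at hi
  have hilen : i ≤ T.length := by omega
  simp only [Function.comp_apply, decide_eq_true_eq]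
  rw [suffix_prefix_iff hilen, getD_drop', length_toW, ← rightCtx_eq_getD]

lemma countP_allSuffixes (R : Multiset (List Base)) (hR : RCClosed R) (X : List Base)
    (Q : SymB → Prop) [DecidablePred Q] :
    Multiset.countP
      (fun S => toW (revComp X) <+: S ∧ Q (S.getD (toW (revComp X)).length ⊥))
      (allSuffixes R)
    = (R.map (fun T =>
        {j | occursAt X T j ∧ Q (WithBot.map comp (leftCtx T j))}.ncard)).sum := by
  rw [allSuffixes, countP_bind_list]
  have h1 : R.map (fun T => ((sentinelTerm T).tails.dropLast).countP
        (fun S => decide (toW (revComp X) <+: S ∧ Q (S.getD (toW (revComp X)).length ⊥))))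
      = R.map ((fun T =>
        {j | occursAt X T j ∧ Q (WithBot.map comp (leftCtx T j))}.ncard) ∘ revComp) :=
    Multiset.map_congr rfl (fun T _ => count_suffixList X T Q)
  rw [h1, ← Multiset.map_map, map_revComp_eq hR]

lemma perT_bwt (X : List Base) (c : Base) (T : List Base) :
    ((List.range (T.length + 1)).map (fun i =>
      ((sentinelTerm T).drop i,
        if i = 0 then (⊥ : WithBot Base) else (sentinelTerm T).getD (i-1) ⊥))).countP
      (fun p => decide (toW X <+: p.1 ∧
        WithBot.map comp p.2 < ((comp c : Base) : WithBot Base)))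
    = {i | occursAt X T i ∧
        WithBot.map comp (leftCtx T i) < ((comp c : Base) : WithBot Base)}.ncard := by
  rw [List.countP_map,
    ncard_setOf_eq_countP (T.length+1) _ (fun i hi => by have := hi.1.1; omega)]
  apply List.countP_congr
  intro i hi
  rw [List.mem_range] at hi
  simp only [Function.comp_apply, decide_eq_true_eq]
  rw [suffix_prefix_iff (by omega : i ≤ T.length), tag_eq_leftCtx]

lemma bwt_eq (R : Multiset (List Base)) (X : List Base) (c : Base) :
    bwtCount R X c = (R.map (fun T =>
      {i | occursAt X T i ∧
        WithBot.map comp (leftCtx T i) < ((comp c : Base) : WithBot Base)}.ncard)).sum := by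
  rw [bwtCount, ← Multiset.countP_eq_card_filter, taggedSuffixes, countP_bind_list]
  exact congrArg Multiset.sum (Multiset.map_congr rfl (fun T _ => perT_bwt X c T))

end Aux5

/-- let `R` be RC-closed, `X` a nonempty DNA string occurring in
`R`, and `c` a DNA symbol. If `[s_X, e_X)` and `[s_X̂, e_X̂)` are the rank
intervals of the suffixes prefixed by `X` and `X̂`, then the rank interval of
the suffixes prefixed by `X̂·π(c)` is `[s_X̂ + y, s_X̂ + y + z)` where `y` is the
number of occurrences of `X` in strings of `R` whose left-context symbol `a`
satisfies `π(a) < π(c)` and `z = occ_R(c·X)`; moreover `y` equals the number of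
ranks `k` in the interval of `X` with `π(BWT[k]) < π(c)`. -/
theorem stmt_8 (R : Multiset (List Base)) (hR : RCClosed R)
    (X : List Base) (hX : X ≠ []) (hocc : 0 < occR R X)
    (c : Base) (sX eX sXh eXh : ℕ)
    (hIX : rankSet R (toW X) = Set.Ico sX eX)
    (hIXh : rankSet R (toW (revComp X)) = Set.Ico sXh eXh)
    (y z : ℕ)
    (hy : y = (R.map (fun T =>
      {i | occursAt X T i ∧
           WithBot.map comp (leftCtx T i) < ((comp c : Base) : WithBot Base)}.ncard)).sum)
    (hz : z = occR R (c :: X)) :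
    rankSet R (toW (revComp X) ++ [((comp c : Base) : WithBot Base)]) =
      Set.Ico (sXh + y) (sXh + y + z) ∧
    y = bwtCount R X c := by

  set L : List (List SymB) := sortedSuffixes R with hL
  set W : List SymB := toW (revComp X) with hW
  set pc : SymB := ((comp c : Base) : SymB) with hpc
  have hsort : L.Pairwise (· ≤ ·) := Multiset.pairwise_sort _ _
  have hcoeL : (L : Multiset (List SymB)) = allSuffixes R := Multiset.sort_eq _ _
  have hmono : ∀ {k k' : ℕ}, k ≤ k' → k' < L.length → L.getD k [] ≤ L.getD k' [] := by
    intro k k' hkk hk'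
    have hk : k < L.length := lt_of_le_of_lt hkk hk'
    rw [List.getD_eq_getElem L [] hk, List.getD_eq_getElem L [] hk']
    have := hsort.rel_get_of_le (a := ⟨k, hk⟩) (b := ⟨k', hk'⟩) hkk
    simpa [List.get_eq_getElem] using this
  have hrank : ∀ k, k ∈ Set.Ico sXh eXh ↔ (k < L.length ∧ W <+: L.getD k []) := by
    intro k
    rw [← hIXh]
    exact Iff.rfl
  set A : Finset ℕ := (Finset.range L.length).filter
      (fun k => W <+: L.getD k [] ∧ (L.getD k []).getD W.length ⊥ < pc) with hA
  set AB : Finset ℕ := (Finset.range L.length).filter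
      (fun k => W <+: L.getD k [] ∧ (L.getD k []).getD W.length ⊥ ≤ pc) with hAB
  set B : Finset ℕ := (Finset.range L.length).filter
      (fun k => W <+: L.getD k [] ∧ (L.getD k []).getD W.length ⊥ = pc) with hB
  -- subset facts
  have hAsub : A ⊆ Finset.Ico sXh eXh := by
    intro k hk
    rw [hA, Finset.mem_filter, Finset.mem_range] at hk
    have := (hrank k).2 ⟨hk.1, hk.2.1⟩
    simpa [Finset.mem_Ico, Set.mem_Ico] using this
  have hABsub : AB ⊆ Finset.Ico sXh eXh := by
    intro k hk
    rw [hAB, Finset.mem_filter, Finset.mem_range] at hk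
    have := (hrank k).2 ⟨hk.1, hk.2.1⟩
    simpa [Finset.mem_Ico, Set.mem_Ico] using this
  -- downward closedness
  have hdcA : A = Finset.Ico sXh (sXh + A.card) := by
    refine dc_eq_Ico sXh eXh A hAsub ?_
    intro k hk a ha hka
    rw [hA, Finset.mem_filter, Finset.mem_range] at ha ⊢
    have hkIco : k < L.length ∧ W <+: L.getD k [] := by
      refine (hrank k).1 ?_
      simpa [Set.mem_Ico] using (Finset.mem_Ico.1 hk)
    have hle : L.getD k [] ≤ L.getD a [] := hmono hka ha.1
    exact ⟨hkIco.1, hkIco.2,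
      lt_of_le_of_lt (getD_mono_of_prefix hkIco.2 ha.2.1 hle) ha.2.2⟩
  have hdcAB : AB = Finset.Ico sXh (sXh + AB.card) := by
    refine dc_eq_Ico sXh eXh AB hABsub ?_
    intro k hk a ha hka
    rw [hAB, Finset.mem_filter, Finset.mem_range] at ha ⊢
    have hkIco : k < L.length ∧ W <+: L.getD k [] := by
      refine (hrank k).1 ?_
      simpa [Set.mem_Ico] using (Finset.mem_Ico.1 hk)
    have hle : L.getD k [] ≤ L.getD a [] := hmono hka ha.1
    exact ⟨hkIco.1, hkIco.2,
      le_trans (getD_mono_of_prefix hkIco.2 ha.2.1 hle) ha.2.2⟩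
  have hABunion : AB = A ∪ B := by
    ext k
    rw [hAB, hA, hB, Finset.mem_union, Finset.mem_filter, Finset.mem_filter,
      Finset.mem_filter]
    constructor
    · rintro ⟨h1, h2, h3⟩
      rcases lt_or_eq_of_le h3 with h | h
      · exact Or.inl ⟨h1, h2, h⟩
      · exact Or.inr ⟨h1, h2, h⟩
    · rintro (⟨h1, h2, h3⟩ | ⟨h1, h2, h3⟩)
      · exact ⟨h1, h2, le_of_lt h3⟩
      · exact ⟨h1, h2, le_of_eq h3⟩
  have hdisj : Disjoint A B := by
    rw [Finset.disjoint_left]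
    intro k hkA hkB
    rw [hA, Finset.mem_filter] at hkA
    rw [hB, Finset.mem_filter] at hkB
    exact absurd hkB.2.2 (ne_of_lt hkA.2.2)
  have hABcard : AB.card = A.card + B.card := by
    rw [hABunion, Finset.card_union_of_disjoint hdisj]
  have hBIco : B = Finset.Ico (sXh + A.card) (sXh + A.card + B.card) := by
    have h1 : B = AB \ A := by
      ext k
      rw [Finset.mem_sdiff, hAB, hA, hB, Finset.mem_filter, Finset.mem_filter,
        Finset.mem_filter]
      constructor
      · rintro ⟨h1, h2, h3⟩
        refine ⟨⟨h1, h2, le_of_eq h3⟩, ?_⟩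
        rintro ⟨_, _, h4⟩
        exact absurd h3 (ne_of_lt h4)
      · rintro ⟨⟨h1, h2, h3⟩, h4⟩
        refine ⟨h1, h2, ?_⟩
        rcases lt_or_eq_of_le h3 with h | h
        · exact absurd ⟨h1, h2, h⟩ h4
        · exact h
    rw [hABcard] at hdcAB
    have hmemAB := fun k => Finset.ext_iff.1 hdcAB k
    have hmemA := fun k => Finset.ext_iff.1 hdcA k
    have hmemB := fun k => Finset.ext_iff.1 h1 k
    ext k
    rw [hmemB k, Finset.mem_sdiff, hmemAB k, hmemA k, Finset.mem_Ico, Finset.mem_Ico,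
      Finset.mem_Ico]
    omega
  -- card A = y
  have hAcard : A.card = y := by
    rw [hA, card_filter_range_eq_countP,
      countP_range_getD L (fun S => decide (W <+: S ∧ S.getD W.length ⊥ < pc)) [],
      ← Multiset.coe_countP, hcoeL, hW]
    rw [countP_allSuffixes R hR X (fun x => x < pc)]
    rw [hy]
  -- card B = z
  have hBcard : B.card = z := by
    rw [hB, card_filter_range_eq_countP,
      countP_range_getD L (fun S => decide (W <+: S ∧ S.getD W.length ⊥ = pc)) [],
      ← Multiset.coe_countP, hcoeL, hW]
    rw [countP_allSuffixes R hR X (fun x => x = pc)]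
    rw [hz, occR]
    have hmap : R.map (fun T =>
        {j | occursAt X T j ∧ WithBot.map comp (leftCtx T j) = pc}.ncard)
        = R.map (fun T => occCount (c :: X) T) := by
      refine Multiset.map_congr rfl (fun T _ => ?_)
      have hsets : {j | occursAt X T j ∧ WithBot.map comp (leftCtx T j) = pc}
          = {j | occursAt X T j ∧ leftCtx T j = (c : SymB)} := by
        ext j
        simp only [Set.mem_setOf_eq, and_congr_right_iff]
        intro _
        constructor
        · intro h
          have h2 := congrArg (WithBot.map comp) h
          rwa [mapcomp_inv, hpc, WithBot.map_coe, comp_comp] at h2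
        · intro h
          rw [h, hpc, WithBot.map_coe]
      rw [hsets, ncard_left_c]
    rw [hmap]
  constructor
  · -- interval part
    have hrankB : rankSet R (W ++ [pc]) = ↑B := by
      ext k
      rw [rankSet, hB]
      simp only [Finset.coe_filter, Finset.mem_range, Set.mem_setOf_eq]
      rw [snoc_prefix_iff (WithBot.coe_ne_bot : pc ≠ ⊥)]
    rw [hrankB, hBIco, hAcard, hBcard, Finset.coe_Ico]
  · rw [hy, bwt_eq]
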